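/- Suppose Assumptions (S1) (with α = 1) and (S3) hold with some q ≥ 1, the kernel assumption holds, and K is symmetric (K(−x) = K(x)). Then there exist a constant C > 0 and a function η : (0,1) → [0,∞) with η(b) → 0 as b → 0 such that for all n ∈ ℕ and b ∈ (0,1) with nb ≥ 1: sup_{u ∈ [b/2, 1−b/2]} | (1/n) Σ_{t=1}^n K_b(t/n − u) (E X̃_t(t/n) − E X̃_0(u)) | ≤ η(b) · b + C n^{−1}. -/

import Mathlib

open MeasureTheory Filter Set Topology

noncomputable section

/-- The two-sided shift on `ℤ → ℝ`. -/
def shiftZ : (ℤ → ℝ) → (ℤ → ℝ) := fun x t => x (t + 1)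

/-- Stationarity and ergodicity of a real-valued process indexed by `ℤ`. -/
def StatErg {Ω : Type*} [MeasurableSpace Ω] (μ : Measure Ω) (X : ℤ → Ω → ℝ) : Prop :=
  Ergodic shiftZ (Measure.map (fun ω t => X t ω) μ)

/-- The localizing-kernel assumption. -/
structure KernelAssumption (K : ℝ → ℝ) (Kinf BK : ℝ) : Prop where
  pos : 0 < Kinf
  bound : ∀ x, |K x| ≤ Kinf
  bv : eVariationOn K Set.univ ≤ ENNReal.ofReal BK
  supp : Function.support K ⊆ Set.Icc (-(1/2) : ℝ) (1/2)
  int_one : (∫ x, K x) = 1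

lemma shiftZ_measurable : Measurable shiftZ :=
  measurable_pi_lambda _ fun t => measurable_pi_apply (t + 1)

lemma shiftZ_iterate (k : ℕ) (x : ℤ → ℝ) (t : ℤ) : shiftZ^[k] x t = x (t + k) := by
  induction k generalizing x t with
  | zero => simp
  | succ m ih =>
    rw [Function.iterate_succ_apply, ih (shiftZ x) t]
    simp only [shiftZ]
    congr 1
    push_cast
    ring

lemma stat_integral {Ω : Type*} [MeasurableSpace Ω] (μ : Measure Ω) (Y : ℤ → Ω → ℝ)
    (hmeas : ∀ t, Measurable (Y t)) (h : StatErg μ (fun t => Y t)) (k : ℕ) :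
    ∫ ω, Y (k : ℤ) ω ∂μ = ∫ ω, Y 0 ω ∂μ := by
  set Φ : Ω → (ℤ → ℝ) := fun ω t => Y t ω with hΦ
  have hΦm : Measurable Φ := measurable_pi_lambda _ fun t => hmeas t
  set ν := Measure.map Φ μ with hν
  have hmp : MeasurePreserving shiftZ ν ν := h.toMeasurePreserving
  have hev : ∀ s : ℤ, Measurable fun x : ℤ → ℝ => x s := fun s => measurable_pi_apply s
  have e1 : ∀ s : ℤ, ∫ ω, Y s ω ∂μ = ∫ x, x s ∂ν := by
    intro s
    rw [hν, integral_map hΦm.aemeasurable ((hev s).aestronglyMeasurable)]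
  have hiter : MeasurePreserving (shiftZ^[k]) ν ν := hmp.iterate k
  have e2 : ∫ x, x (0 : ℤ) ∂ν = ∫ x, x (k : ℤ) ∂ν := by
    calc ∫ x, x (0 : ℤ) ∂ν = ∫ x, x (0 : ℤ) ∂(Measure.map (shiftZ^[k]) ν) := by rw [hiter.map_eq]
    _ = ∫ x, (shiftZ^[k] x) 0 ∂ν := by
        rw [integral_map hiter.measurable.aemeasurable ((hev 0).aestronglyMeasurable)]
    _ = ∫ x, x (k : ℤ) ∂ν := by
        refine integral_congr_ae (Eventually.of_forall fun x => ?_)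
        show shiftZ^[k] x 0 = x (k : ℤ)
        rw [shiftZ_iterate]; norm_num
  rw [e1, e1, e2]

lemma evar_const_mul (c : ℝ) (hc : 0 ≤ c) (f : ℝ → ℝ) (s : Set ℝ) :
    eVariationOn (fun x => c * f x) s ≤ ENNReal.ofReal c * eVariationOn f s := by
  have hed : ∀ a b : ℝ, edist (c * a) (c * b) = ENNReal.ofReal c * edist a b := by
    intro a b
    rw [edist_dist, edist_dist, Real.dist_eq, Real.dist_eq, ← ENNReal.ofReal_mul hc]
    congr 1
    rw [← mul_sub, abs_mul, abs_of_nonneg hc]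
  apply iSup_le _
  rintro ⟨n, ⟨u, hu, us⟩⟩
  calc ∑ i ∈ Finset.range n, edist (c * f (u (i + 1))) (c * f (u i))
      = ENNReal.ofReal c * ∑ i ∈ Finset.range n, edist (f (u (i + 1))) (f (u i)) := by
        rw [Finset.mul_sum]; exact Finset.sum_congr rfl fun i _ => hed _ _
    _ ≤ ENNReal.ofReal c * eVariationOn f s :=
        mul_le_mul' le_rfl (eVariationOn.sum_le (f := f) (n := n) hu us)

lemma grid_var (f : ℝ → ℝ) (n : ℕ) (hn : (0:ℝ) < (n:ℝ)) (m : ℕ) :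
    ∑ i ∈ Finset.range m, eVariationOn f (Icc ((i:ℝ)/(n:ℝ)) (((i:ℝ)+1)/(n:ℝ)))
      ≤ eVariationOn f (Icc 0 ((m:ℝ)/(n:ℝ))) := by
  induction m with
  | zero => simp
  | succ m ih =>
    rw [Finset.sum_range_succ]
    have h1 : (0:ℝ) ≤ (m:ℝ)/(n:ℝ) := by positivity
    have h2 : (m:ℝ)/(n:ℝ) ≤ ((m:ℝ)+1)/(n:ℝ) := by gcongr; linarith
    have key := eVariationOn.Icc_add_Icc f (s := univ) h1 h2 (mem_univ _)
    simp only [univ_inter] at key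
    calc ∑ i ∈ Finset.range m, eVariationOn f (Icc ((i:ℝ)/(n:ℝ)) (((i:ℝ)+1)/(n:ℝ)))
          + eVariationOn f (Icc ((m:ℝ)/(n:ℝ)) (((m:ℝ)+1)/(n:ℝ)))
        ≤ eVariationOn f (Icc 0 ((m:ℝ)/(n:ℝ)))
          + eVariationOn f (Icc ((m:ℝ)/(n:ℝ)) (((m:ℝ)+1)/(n:ℝ))) := add_le_add_left ih _
      _ = eVariationOn f (Icc 0 (((m:ℝ)+1)/(n:ℝ))) := key
      _ = eVariationOn f (Icc 0 ((((m+1):ℕ):ℝ)/(n:ℝ))) := by push_cast; ring_nf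

lemma kernel_var (K : ℝ → ℝ) (BK : ℝ) (hbv : eVariationOn K univ ≤ ENNReal.ofReal BK)
    (b u : ℝ) (hb : 0 < b) :
    eVariationOn (fun x => b⁻¹ * K ((x - u)/b)) (Icc (0:ℝ) 1)
      ≤ ENNReal.ofReal b⁻¹ * ENNReal.ofReal BK := by
  have hmono : MonotoneOn (fun x : ℝ => (x - u)/b) (Icc (0:ℝ) 1) := by
    intro x _ y _ hxy
    have h : x - u ≤ y - u := by linarith
    exact div_le_div_of_nonneg_right h hb.le
  have h1 : eVariationOn (fun x => K ((x - u)/b)) (Icc (0:ℝ) 1) ≤ ENNReal.ofReal BK := by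
    have heq : (fun x => K ((x - u)/b)) = K ∘ (fun x : ℝ => (x - u)/b) := rfl
    rw [heq, eVariationOn.comp_eq_of_monotoneOn K _ hmono]
    exact le_trans (eVariationOn.mono K (subset_univ _)) hbv
  calc eVariationOn (fun x => b⁻¹ * K ((x - u)/b)) (Icc (0:ℝ) 1)
      ≤ ENNReal.ofReal b⁻¹ * eVariationOn (fun x => K ((x - u)/b)) (Icc (0:ℝ) 1) :=
        evar_const_mul b⁻¹ (by positivity) _ _
    _ ≤ ENNReal.ofReal b⁻¹ * ENNReal.ofReal BK := mul_le_mul' le_rfl h1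

lemma bv_measurable (K : ℝ → ℝ) (BK : ℝ) (hbv : eVariationOn K univ ≤ ENNReal.ofReal BK) :
    Measurable K := by
  have hBV : BoundedVariationOn K univ := ne_top_of_le_ne_top ENNReal.ofReal_ne_top hbv
  obtain ⟨p, q, hp, hq, hpq⟩ :=
    hBV.locallyBoundedVariationOn.exists_monotoneOn_sub_monotoneOn
  rw [hpq]
  exact ((monotoneOn_univ.mp hp).measurable).sub ((monotoneOn_univ.mp hq).measurable)

lemma card_filter_bound (n : ℕ) (b u : ℝ) (hb : 0 < b) (hn : (0:ℝ) < (n:ℝ))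
    (hu : 0 ≤ u - b/2) :
    (((Finset.range n).filter (fun i : ℕ => |((i:ℝ)+1)/(n:ℝ) - u| ≤ b/2)).card : ℝ)
      ≤ (n:ℝ)*b + 1 := by
  set a := ⌈(n:ℝ)*(u - b/2)⌉₊ with ha
  set c := ⌊(n:ℝ)*(u + b/2)⌋₊ with hc
  have hmaps : ∀ i ∈ (Finset.range n).filter (fun i : ℕ => |((i:ℝ)+1)/(n:ℝ) - u| ≤ b/2),
      i + 1 ∈ Finset.Icc a c := by
    intro i hi
    rw [Finset.mem_filter] at hi
    have habs := abs_le.mp hi.2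
    have h1 : (n:ℝ)*(u - b/2) ≤ (i:ℝ)+1 := by
      have := habs.1
      have h' : u - b/2 ≤ ((i:ℝ)+1)/(n:ℝ) := by linarith
      calc (n:ℝ)*(u - b/2) ≤ (n:ℝ)*(((i:ℝ)+1)/(n:ℝ)) := by
            exact mul_le_mul_of_nonneg_left h' hn.le
        _ = (i:ℝ)+1 := by field_simp
    have h2 : ((i:ℝ)+1) ≤ (n:ℝ)*(u + b/2) := by
      have := habs.2
      have h' : ((i:ℝ)+1)/(n:ℝ) ≤ u + b/2 := by linarith
      calc ((i:ℝ)+1) = (n:ℝ)*(((i:ℝ)+1)/(n:ℝ)) := by field_simp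
        _ ≤ (n:ℝ)*(u + b/2) := mul_le_mul_of_nonneg_left h' hn.le
    rw [Finset.mem_Icc]
    constructor
    · rw [ha, Nat.ceil_le]
      push_cast
      exact h1
    · rw [hc, Nat.le_floor_iff (by nlinarith : (0:ℝ) ≤ (n:ℝ)*(u + b/2))]
      push_cast
      exact h2
  have hinj : Set.InjOn (· + 1)
      ↑((Finset.range n).filter (fun i : ℕ => |((i:ℝ)+1)/(n:ℝ) - u| ≤ b/2)) := by
    intro x _ y _ h
    simpa using h
  have hcard := Finset.card_le_card_of_injOn _ hmaps hinj
  rw [Nat.card_Icc] at hcard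
  have h3 : ((c + 1 - a : ℕ) : ℝ) ≤ (n:ℝ)*b + 1 := by
    rcases le_or_gt a (c+1) with h | h
    · rw [Nat.cast_sub h]
      have hcle : (c:ℝ) ≤ (n:ℝ)*(u + b/2) := Nat.floor_le (by nlinarith : (0:ℝ) ≤ (n:ℝ)*(u + b/2))
      have hage : (n:ℝ)*(u - b/2) ≤ (a:ℝ) := Nat.le_ceil _
      push_cast
      nlinarith
    · rw [Nat.sub_eq_zero_of_le h.le]
      have : (0:ℝ) ≤ (n:ℝ)*b := by positivity
      simp
      linarith
  calc (((Finset.range n).filter (fun i : ℕ => |((i:ℝ)+1)/(n:ℝ) - u| ≤ b/2)).card : ℝ)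
      ≤ ((c + 1 - a : ℕ) : ℝ) := by exact_mod_cast hcard
    _ ≤ (n:ℝ)*b + 1 := h3

lemma kernel_sum_bound (K : ℝ → ℝ) (Kinf : ℝ) (hKb : ∀ x, |K x| ≤ Kinf)
    (hsupp : Function.support K ⊆ Icc (-(1/2):ℝ) (1/2))
    (n : ℕ) (hn : 1 ≤ n) (b u : ℝ) (hb : 0 < b) (hb1 : b < 1) (hnb : 1 ≤ (n:ℝ)*b)
    (hu : b/2 ≤ u) :
    ∑ i ∈ Finset.range n, |b⁻¹ * K ((((i:ℝ)+1)/(n:ℝ) - u)/b)|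
      ≤ 2*(n:ℝ)*Kinf := by
  have hnpos : (0:ℝ) < (n:ℝ) := by exact_mod_cast hn
  have hKinf : 0 ≤ Kinf := le_trans (abs_nonneg _) (hKb 0)
  have hsupp' : ∀ y : ℝ, K y ≠ 0 → |y| ≤ 1/2 := by
    intro y hy
    have := hsupp (by simpa [Function.mem_support] using hy)
    rw [abs_le]
    exact ⟨this.1, this.2⟩
  set P : ℕ → Prop := fun i => |((i:ℝ)+1)/(n:ℝ) - u| ≤ b/2 with hP
  have hstep : ∑ i ∈ Finset.range n, |b⁻¹ * K ((((i:ℝ)+1)/(n:ℝ) - u)/b)|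
      = ∑ i ∈ (Finset.range n).filter P, |b⁻¹ * K ((((i:ℝ)+1)/(n:ℝ) - u)/b)| := by
    symm
    apply Finset.sum_filter_of_ne
    intro i _ hne
    have hKne : K ((((i:ℝ)+1)/(n:ℝ) - u)/b) ≠ 0 := by
      intro h0
      apply hne
      rw [h0, mul_zero, abs_zero]
    have := hsupp' _ hKne
    rw [abs_div, abs_of_pos hb] at this
    have := (div_le_iff₀ hb).mp this
    show |((i:ℝ)+1)/(n:ℝ) - u| ≤ b/2
    linarith
  rw [hstep]
  have hterm : ∀ i ∈ (Finset.range n).filter P,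
      |b⁻¹ * K ((((i:ℝ)+1)/(n:ℝ) - u)/b)| ≤ b⁻¹ * Kinf := by
    intro i _
    rw [abs_mul, abs_of_pos (by positivity : (0:ℝ) < b⁻¹)]
    exact mul_le_mul_of_nonneg_left (hKb _) (by positivity)
  calc ∑ i ∈ (Finset.range n).filter P, |b⁻¹ * K ((((i:ℝ)+1)/(n:ℝ) - u)/b)|
      ≤ ∑ _i ∈ (Finset.range n).filter P, b⁻¹ * Kinf := Finset.sum_le_sum hterm
    _ = (((Finset.range n).filter P).card : ℝ) * (b⁻¹ * Kinf) := by
        rw [Finset.sum_const, nsmul_eq_mul]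
    _ ≤ ((n:ℝ)*b + 1) * (b⁻¹ * Kinf) := by
        apply mul_le_mul_of_nonneg_right _ (by positivity)
        exact card_filter_bound n b u hb hnpos (by linarith)
    _ ≤ (2*(n:ℝ)*b) * (b⁻¹ * Kinf) := by
        apply mul_le_mul_of_nonneg_right _ (by positivity)
        linarith
    _ = 2*(n:ℝ)*b*b⁻¹*Kinf := by ring
    _ = 2*(n:ℝ)*Kinf := by rw [mul_inv_cancel_right₀ (ne_of_gt hb)]

lemma bdd_meas_intervalIntegrable (g : ℝ → ℝ) (M : ℝ) (hm : Measurable g)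
    (hb : ∀ x, |g x| ≤ M) (a c : ℝ) : IntervalIntegrable g volume a c := by
  rw [intervalIntegrable_iff]
  apply Measure.integrableOn_of_bounded (measure_Ioc_lt_top).ne hm.aestronglyMeasurable
  exact Eventually.of_forall fun x => by simpa [Real.norm_eq_abs] using hb x

section Kernel
variable (K : ℝ → ℝ) (Kinf : ℝ) (b u : ℝ)

lemma support_arg (hsupp : Function.support K ⊆ Icc (-(1/2):ℝ) (1/2)) (hb : 0 < b)
    (x : ℝ) (hne : K ((x - u)/b) ≠ 0) : |x - u| ≤ b/2 := by
  have h1 := hsupp (by simpa [Function.mem_support] using hne)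
  have h2 : |(x-u)/b| ≤ 1/2 := abs_le.mpr ⟨h1.1, h1.2⟩
  rw [abs_div, abs_of_pos hb] at h2
  have := (div_le_iff₀ hb).mp h2
  linarith

lemma h_glob_bound (hKb : ∀ x, |K x| ≤ Kinf)
    (hsupp : Function.support K ⊆ Icc (-(1/2):ℝ) (1/2)) (hb : 0 < b) (x : ℝ) :
    |b⁻¹ * K ((x - u)/b) * (x - u)| ≤ Kinf / 2 := by
  have hKinf : 0 ≤ Kinf := le_trans (abs_nonneg _) (hKb 0)
  by_cases hne : K ((x - u)/b) = 0
  · rw [hne]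
    simp
    positivity
  · have habs := support_arg K b u hsupp hb x hne
    rw [abs_mul, abs_mul, abs_of_pos (by positivity : (0:ℝ) < b⁻¹)]
    calc b⁻¹ * |K ((x - u)/b)| * |x - u| ≤ b⁻¹ * Kinf * (b/2) := by
          apply mul_le_mul _ habs (abs_nonneg _) (by positivity)
          exact mul_le_mul_of_nonneg_left (hKb _) (by positivity)
      _ = Kinf / 2 := by field_simp

lemma integral_h_zero (hKb : ∀ x, |K x| ≤ Kinf) (hmeas : Measurable K)
    (hsupp : Function.support K ⊆ Icc (-(1/2):ℝ) (1/2)) (hKsymm : ∀ x, K (-x) = K x)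
    (hb : 0 < b) (hu1 : 0 ≤ u - b/2) (hu2 : u + b/2 ≤ 1) :
    ∫ x in (0:ℝ)..1, b⁻¹ * K ((x - u)/b) * (x - u) = 0 := by
  set h : ℝ → ℝ := fun x => b⁻¹ * K ((x - u)/b) * (x - u) with hh
  have hhm : Measurable h := by
    apply Measurable.mul
    apply Measurable.mul measurable_const
    · exact hmeas.comp (by fun_prop)
    · fun_prop
  have hint : ∀ a c : ℝ, IntervalIntegrable h volume a c :=
    bdd_meas_intervalIntegrable h (Kinf/2) hhm
      (fun x => h_glob_bound K Kinf b u hKb hsupp hb x)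
  have split1 : ∫ x in (0:ℝ)..1, h x
      = (∫ x in (0:ℝ)..(u - b/2), h x) + ((∫ x in (u-b/2)..(u+b/2), h x)
        + ∫ x in (u+b/2)..(1:ℝ), h x) := by
    rw [intervalIntegral.integral_add_adjacent_intervals (hint _ _) (hint _ _),
        intervalIntegral.integral_add_adjacent_intervals (hint _ _) (hint _ _)]
  have left0 : ∫ x in (0:ℝ)..(u - b/2), h x = 0 := by
    have hne := (measure_eq_zero_iff_ae_notMem (μ := (volume : Measure ℝ))).mp
      (measure_singleton (u - b/2))
    have : ∫ x in (0:ℝ)..(u-b/2), h x = ∫ x in (0:ℝ)..(u-b/2), (0:ℝ) := by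
      apply intervalIntegral.integral_congr_ae
      filter_upwards [hne] with x hx' hmem
      have hx : x ≠ u - b/2 := by simpa using hx'
      clear hx'
      rw [uIoc_of_le (by linarith : (0:ℝ) ≤ u - b/2)] at hmem
      have hlt : x < u - b/2 := lt_of_le_of_ne hmem.2 hx
      have hK0 : K ((x - u)/b) = 0 := by
        by_contra hc
        have := support_arg K b u hsupp hb x hc
        rw [abs_le] at this
        linarith [this.1]
      rw [hh]
      simp [hK0]
    simpa using this
  have right0 : ∫ x in (u+b/2)..(1:ℝ), h x = 0 := by
    have : ∫ x in (u+b/2)..(1:ℝ), h x = ∫ x in (u+b/2)..(1:ℝ), (0:ℝ) := by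
      apply intervalIntegral.integral_congr_ae
      apply Eventually.of_forall
      intro x hmem
      rw [uIoc_of_le (by linarith : u + b/2 ≤ 1)] at hmem
      have hlt : u + b/2 < x := hmem.1
      have hK0 : K ((x - u)/b) = 0 := by
        by_contra hc
        have := support_arg K b u hsupp hb x hc
        rw [abs_le] at this
        linarith [this.2]
      rw [hh]
      simp [hK0]
    simpa using this
  have mid0 : ∫ x in (u-b/2)..(u+b/2), h x = 0 := by
    set ψ : ℝ → ℝ := fun y => b⁻¹ * K (y/b) * y with hψ
    have hψm : Measurable ψ := by
      apply Measurable.mul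
      apply Measurable.mul measurable_const
      · exact hmeas.comp (by fun_prop)
      · fun_prop
    have hψb : ∀ y, |ψ y| ≤ Kinf / 2 := by
      intro y
      have := h_glob_bound K Kinf b 0 hKb hsupp hb y
      simpa [hψ] using this
    have hψint : ∀ a c : ℝ, IntervalIntegrable ψ volume a c :=
      bdd_meas_intervalIntegrable ψ (Kinf/2) hψm hψb
    have hcomp : ∫ y in (-(b/2))..(b/2), h (y + u) = ∫ x in (-(b/2)+u)..(b/2+u), h x :=
      intervalIntegral.integral_comp_add_right h u
    have heq : ∀ y : ℝ, h (y + u) = ψ y := by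
      intro y
      rw [hh, hψ]
      simp
    have hmid : ∫ y in (-(b/2))..(b/2), ψ y = ∫ x in (u-b/2)..(u+b/2), h x := by
      calc ∫ y in (-(b/2))..(b/2), ψ y
          = ∫ y in (-(b/2))..(b/2), h (y + u) :=
            intervalIntegral.integral_congr (fun y _ => (heq y).symm)
        _ = ∫ x in (-(b/2)+u)..(b/2+u), h x := hcomp
        _ = ∫ x in (u-b/2)..(u+b/2), h x := by congr 1 <;> ring
    rw [← hmid]
    have hodd : ∀ y, ψ (-y) = -ψ y := by
      intro y
      rw [hψ]
      simp only
      rw [neg_div, hKsymm]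
      ring
    have hsplit : ∫ y in (-(b/2))..(b/2), ψ y
        = (∫ y in (-(b/2))..(0:ℝ), ψ y) + ∫ y in (0:ℝ)..(b/2), ψ y :=
      (intervalIntegral.integral_add_adjacent_intervals (hψint _ _) (hψint _ _)).symm
    have hneg : ∫ y in (-(b/2))..(0:ℝ), ψ y = - ∫ y in (0:ℝ)..(b/2), ψ y := by
      have h1 : ∫ y in (0:ℝ)..(b/2), ψ (-y) = ∫ y in (-(b/2))..(0:ℝ), ψ y := by
        have := intervalIntegral.integral_comp_neg (a := (0:ℝ)) (b := b/2) ψ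
        simpa using this
      rw [← h1]
      simp_rw [hodd]
      rw [intervalIntegral.integral_neg]
    rw [hsplit, hneg]
    ring
  rw [split1, left0, right0, mid0]
  ring
end Kernel

lemma riemann_bound (K : ℝ → ℝ) (Kinf BK : ℝ) (hKb : ∀ x, |K x| ≤ Kinf)
    (hbv : eVariationOn K univ ≤ ENNReal.ofReal BK)
    (hsupp : Function.support K ⊆ Icc (-(1/2):ℝ) (1/2))
    (hKsymm : ∀ x, K (-x) = K x)
    (n : ℕ) (hn : 1 ≤ n) (b : ℝ) (hb : 0 < b) (hb1 : b < 1) (hnb : 1 ≤ (n:ℝ)*b)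
    (u : ℝ) (hu1 : b/2 ≤ u) (hu2 : u ≤ 1 - b/2) :
    |∑ i ∈ Finset.range n,
        (n:ℝ)⁻¹ * (b⁻¹ * K ((((i:ℝ)+1)/(n:ℝ) - u)/b) * (((i:ℝ)+1)/(n:ℝ) - u))|
      ≤ (2*Kinf + 2*max BK 0) * (n:ℝ)⁻¹ := by
  have hnpos : (0:ℝ) < (n:ℝ) := by exact_mod_cast hn
  have hKinf : 0 ≤ Kinf := le_trans (abs_nonneg _) (hKb 0)
  have hmeasK : Measurable K := bv_measurable K BK hbv
  have hninvb : (n:ℝ)⁻¹ ≤ b := by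
    rw [inv_le_iff_one_le_mul₀ hnpos]
    linarith [hnb]
  set f : ℝ → ℝ := fun x => b⁻¹ * K ((x - u)/b) with hf
  set h : ℝ → ℝ := fun x => f x * (x - u) with hh
  have hhm : Measurable h := by
    apply Measurable.mul
    · exact (measurable_const.mul (hmeasK.comp (by fun_prop)))
    · fun_prop
  have hhb : ∀ x, |h x| ≤ Kinf / 2 := by
    intro x
    have := h_glob_bound K Kinf b u hKb hsupp hb x
    simpa [hh, hf, mul_assoc] using this
  have hint : ∀ a c : ℝ, IntervalIntegrable h volume a c :=
    bdd_meas_intervalIntegrable h (Kinf/2) hhm hhb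
  set a : ℕ → ℝ := fun i => (i:ℝ)/(n:ℝ) with ha
  -- variation facts
  have hvar_tot : eVariationOn f (Icc (0:ℝ) 1) ≤ ENNReal.ofReal b⁻¹ * ENNReal.ofReal BK :=
    kernel_var K BK hbv b u hb
  have hcast : ∀ i : ℕ, a (i+1) = ((i:ℝ)+1)/(n:ℝ) := by
    intro i; rw [ha]; push_cast; ring
  have hsubset : ∀ i : ℕ, i < n → Icc (a i) (a (i+1)) ⊆ Icc (0:ℝ) 1 := by
    intro i hi
    apply Icc_subset_Icc
    · rw [ha]; positivity
    · rw [hcast, div_le_one hnpos]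
      have : (i:ℝ) + 1 ≤ (n:ℝ) := by exact_mod_cast hi
      linarith
  have hvar_fin : ∀ i : ℕ, i < n → eVariationOn f (Icc (a i) (a (i+1))) ≠ ⊤ := by
    intro i hi
    refine ne_top_of_le_ne_top ?_ ((eVariationOn.mono f (hsubset i hi)).trans hvar_tot)
    exact ENNReal.mul_ne_top ENNReal.ofReal_ne_top ENNReal.ofReal_ne_top
  set V : ℕ → ℝ := fun i => (eVariationOn f (Icc (a i) (a (i+1)))).toReal with hV
  have hVnonneg : ∀ i, 0 ≤ V i := fun i => ENNReal.toReal_nonneg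
  have hgrid : ∑ i ∈ Finset.range n, eVariationOn f (Icc (a i) (a (i+1)))
      ≤ eVariationOn f (Icc (0:ℝ) 1) := by
    have := grid_var f n hnpos n
    rw [div_self (ne_of_gt hnpos)] at this
    refine le_trans (le_of_eq ?_) this
    apply Finset.sum_congr rfl
    intro i _
    rw [hcast, ha]
  have hVsum : ∑ i ∈ Finset.range n, V i ≤ b⁻¹ * max BK 0 := by
    calc ∑ i ∈ Finset.range n, V i
        = (∑ i ∈ Finset.range n, eVariationOn f (Icc (a i) (a (i+1)))).toReal := by
          rw [ENNReal.toReal_sum (fun i hi => hvar_fin i (Finset.mem_range.mp hi))]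
      _ ≤ (ENNReal.ofReal b⁻¹ * ENNReal.ofReal BK).toReal :=
          ENNReal.toReal_mono
            (ENNReal.mul_ne_top ENNReal.ofReal_ne_top ENNReal.ofReal_ne_top)
            (hgrid.trans hvar_tot)
      _ = b⁻¹ * max BK 0 := by
          rw [ENNReal.toReal_mul, ENNReal.toReal_ofReal (by positivity),
            ENNReal.toReal_ofReal']
  have hintzero : ∑ i ∈ Finset.range n, ∫ x in a i..a (i+1), h x = 0 := by
    rw [intervalIntegral.sum_integral_adjacent_intervals (fun k _ => hint _ _)]
    have ha0 : a 0 = 0 := by rw [ha]; simp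
    have han : a n = 1 := by rw [ha]; exact div_self (ne_of_gt hnpos)
    rw [ha0, han]
    exact integral_h_zero K Kinf b u hKb hmeasK hsupp hKsymm hb
      (by linarith) (by linarith)
  -- per-piece bound
  have hpiece : ∀ i : ℕ, i < n →
      |(n:ℝ)⁻¹ * h (a (i+1)) - ∫ x in a i..a (i+1), h x|
        ≤ (|f (a (i+1))| * (n:ℝ)⁻¹ + (3*b/2) * V i) * (n:ℝ)⁻¹ := by
    intro i hi
    have hle : a i ≤ a (i+1) := by
      rw [hcast]
      show (i:ℝ)/(n:ℝ) ≤ ((i:ℝ)+1)/(n:ℝ)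
      exact div_le_div_of_nonneg_right (by linarith) hnpos.le
    have hlen : a (i+1) - a i = (n:ℝ)⁻¹ := by
      rw [hcast]
      show ((i:ℝ)+1)/(n:ℝ) - (i:ℝ)/(n:ℝ) = (n:ℝ)⁻¹
      field_simp
      ring
    have hconst : (n:ℝ)⁻¹ * h (a (i+1)) = ∫ _x in a i..a (i+1), h (a (i+1)) := by
      rw [intervalIntegral.integral_const, smul_eq_mul, hlen]
    rw [hconst, ← intervalIntegral.integral_sub (intervalIntegrable_const) (hint _ _)]
    have hptwise : ∀ x ∈ uIoc (a i) (a (i+1)),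
        ‖h (a (i+1)) - h x‖ ≤ |f (a (i+1))| * (n:ℝ)⁻¹ + (3*b/2) * V i := by
      intro x hx
      rw [uIoc_of_le hle] at hx
      set xi := a (i+1) with hxi
      have hxle : x ≤ xi := hx.2
      have hxgt : a i < x := hx.1
      have hdist : |xi - x| ≤ (n:ℝ)⁻¹ := by
        rw [abs_of_nonneg (by linarith)]
        linarith [hlen]
      have hid : h xi - h x = f xi * (xi - x) + (x - u) * (f xi - f x) := by
        rw [hh]; ring
      rw [Real.norm_eq_abs, hid]
      refine le_trans (abs_add_le _ _) ?_
      have hba : |f xi * (xi - x)| ≤ |f xi| * (n:ℝ)⁻¹ := by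
        rw [abs_mul]
        exact mul_le_mul_of_nonneg_left hdist (abs_nonneg _)
      have hbb : |(x - u) * (f xi - f x)| ≤ (3*b/2) * V i := by
        by_cases hfe : f x = f xi
        · rw [hfe]
          simp only [sub_self, mul_zero, abs_zero]
          exact mul_nonneg (by positivity) (hVnonneg i)
        · have hxub : |x - u| ≤ 3*b/2 := by
            by_cases hfx : f x = 0
            · have hfxi : f xi ≠ 0 := fun hc => hfe (by rw [hfx, hc])
              have hKxi : K ((xi - u)/b) ≠ 0 := by
                intro hc
                apply hfxi
                rw [hf]
                simp [hc]
              have h1 := support_arg K b u hsupp hb xi hKxi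
              have h2 : |x - xi| ≤ (n:ℝ)⁻¹ := by rw [abs_sub_comm]; exact hdist
              have h3 : |x - u| ≤ |x - xi| + |xi - u| := by
                have : x - u = (x - xi) + (xi - u) := by ring
                rw [this]
                exact abs_add_le _ _
              linarith
            · have hKx : K ((x - u)/b) ≠ 0 := by
                intro hc
                apply hfx
                rw [hf]
                simp [hc]
              have := support_arg K b u hsupp hb x hKx
              linarith
          have hvar : |f xi - f x| ≤ V i := by
            have hxmem : x ∈ Icc (a i) (a (i+1)) := ⟨hxgt.le, hxle⟩
            have hximem : xi ∈ Icc (a i) (a (i+1)) := ⟨hle, le_refl _⟩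
            have hed := eVariationOn.edist_le f hximem hxmem
            rw [edist_dist] at hed
            have h4 := ENNReal.toReal_mono (hvar_fin i hi) hed
            rw [ENNReal.toReal_ofReal dist_nonneg] at h4
            calc |f xi - f x| = dist (f xi) (f x) := (Real.dist_eq _ _).symm
              _ ≤ V i := h4
          calc |(x - u) * (f xi - f x)| = |x - u| * |f xi - f x| := abs_mul _ _
            _ ≤ (3*b/2) * V i :=
              mul_le_mul hxub hvar (abs_nonneg _) (by positivity)
      linarith
    rw [← Real.norm_eq_abs]
    refine le_trans (intervalIntegral.norm_integral_le_of_norm_le_const hptwise)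
      (le_of_eq ?_)
    rw [hlen, abs_of_pos (by positivity : (0:ℝ) < (n:ℝ)⁻¹)]
  -- assemble
  have hsum_f : ∑ i ∈ Finset.range n, |f (a (i+1))| ≤ 2*(n:ℝ)*Kinf := by
    have := kernel_sum_bound K Kinf hKb hsupp n hn b u hb hb1 hnb hu1
    refine le_trans (le_of_eq ?_) this
    apply Finset.sum_congr rfl
    intro i _
    rw [hcast i, hf]
  have hterm_eq : ∀ i ∈ Finset.range n,
      (n:ℝ)⁻¹ * (b⁻¹ * K ((((i:ℝ)+1)/(n:ℝ) - u)/b) * (((i:ℝ)+1)/(n:ℝ) - u))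
        = ((n:ℝ)⁻¹ * h (a (i+1)) - ∫ x in a i..a (i+1), h x)
          + ∫ x in a i..a (i+1), h x := by
    intro i _
    have hha : h (a (i+1))
        = b⁻¹ * K ((((i:ℝ)+1)/(n:ℝ) - u)/b) * (((i:ℝ)+1)/(n:ℝ) - u) := by
      simp only [hh, hf, hcast i]
    rw [hha]
    ring
  rw [Finset.sum_congr rfl hterm_eq, Finset.sum_add_distrib, hintzero, add_zero]
  calc |∑ i ∈ Finset.range n, ((n:ℝ)⁻¹ * h (a (i+1)) - ∫ x in a i..a (i+1), h x)|
      ≤ ∑ i ∈ Finset.range n, |(n:ℝ)⁻¹ * h (a (i+1)) - ∫ x in a i..a (i+1), h x| :=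
        Finset.abs_sum_le_sum_abs _ _
    _ ≤ ∑ i ∈ Finset.range n, (|f (a (i+1))| * (n:ℝ)⁻¹ + (3*b/2) * V i) * (n:ℝ)⁻¹ :=
        Finset.sum_le_sum (fun i hi => hpiece i (Finset.mem_range.mp hi))
    _ = ((∑ i ∈ Finset.range n, |f (a (i+1))|) * (n:ℝ)⁻¹
          + (3*b/2) * ∑ i ∈ Finset.range n, V i) * (n:ℝ)⁻¹ := by
        rw [← Finset.sum_mul]
        congr 1
        rw [Finset.sum_add_distrib, ← Finset.sum_mul, ← Finset.mul_sum]
    _ ≤ ((2*(n:ℝ)*Kinf) * (n:ℝ)⁻¹ + (3*b/2) * (b⁻¹ * max BK 0)) * (n:ℝ)⁻¹ := by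
        apply mul_le_mul_of_nonneg_right _ (by positivity)
        apply add_le_add
        · exact mul_le_mul_of_nonneg_right hsum_f (by positivity)
        · apply mul_le_mul_of_nonneg_left hVsum (by positivity)
    _ = (2*Kinf * ((n:ℝ) * (n:ℝ)⁻¹) + (3/2) * max BK 0 * (b * b⁻¹)) * (n:ℝ)⁻¹ := by
        ring
    _ = (2*Kinf + (3/2) * max BK 0) * (n:ℝ)⁻¹ := by
        rw [mul_inv_cancel₀ (ne_of_gt hnpos), mul_inv_cancel₀ (ne_of_gt hb)]
        ring
    _ ≤ (2*Kinf + 2*max BK 0) * (n:ℝ)⁻¹ := by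
        apply mul_le_mul_of_nonneg_right _ (by positivity)
        have : 0 ≤ max BK 0 := le_max_right _ _
        linarith

/-- **Refined deterministic bias expansion** (Proposition 3.3(a)): under (S1) with
`α = 1`, (S3), the kernel assumption and symmetry of `K`, uniformly in
`u ∈ [b/2, 1−b/2]`:
`(1/n)∑ K_b(t/n−u)(E X̃_t(t/n) − E X̃_0(u)) = o(b) + O(n⁻¹)`. -/
theorem deterministic_bias_refined {Ω : Type*} [MeasurableSpace Ω] (μ : Measure Ω)
    [IsProbabilityMeasure μ]
    (X : ℕ → ℕ → Ω → ℝ) (Xt : ℝ → ℤ → Ω → ℝ) (DX : ℝ → ℤ → Ω → ℝ)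
    (hXmeas : ∀ n t, Measurable (X n t))
    (hXtmeas : ∀ u t, Measurable (Xt u t))
    (hstat : ∀ u ∈ Icc (0:ℝ) 1, StatErg μ (fun t => Xt u t))
    (q : ℝ) (hq : 1 ≤ q) (CB : ℝ) (hCB : 0 < CB)
    -- (S1) with α = 1 :
    (hmom : ∃ M : ℝ, ∀ u ∈ Icc (0:ℝ) 1,
      eLpNorm (Xt u 0) (ENNReal.ofReal q) μ ≤ ENNReal.ofReal M)
    (hhoelder : ∀ u ∈ Icc (0:ℝ) 1, ∀ v ∈ Icc (0:ℝ) 1, ∀ t : ℤ,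
      eLpNorm (fun ω => Xt u t ω - Xt v t ω) (ENNReal.ofReal q) μ
        ≤ ENNReal.ofReal (CB * |u - v|))
    (happrox : ∀ n : ℕ, 1 ≤ n → ∀ t : ℕ, 1 ≤ t → t ≤ n →
      eLpNorm (fun ω => X n t ω - Xt ((t : ℝ) / (n : ℝ)) (t : ℤ) ω) (ENNReal.ofReal q) μ
        ≤ ENNReal.ofReal (CB * (n : ℝ)⁻¹))
    -- (S3) :
    (hderiv : ∀ t : ℤ, ∀ᵐ ω ∂μ,
      (∀ u ∈ Icc (0:ℝ) 1,
        HasDerivWithinAt (fun v => Xt v t ω) (DX u t ω) (Icc (0:ℝ) 1) u) ∧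
      ContinuousOn (fun u => DX u t ω) (Icc (0:ℝ) 1))
    (hDmom : ∀ t : ℤ,
      eLpNorm (fun ω => ⨆ u : Icc (0:ℝ) 1, |DX (u : ℝ) t ω|) (ENNReal.ofReal q) μ < ⊤)
    -- kernel, symmetric :
    (K : ℝ → ℝ) (Kinf BK : ℝ) (hK : KernelAssumption K Kinf BK)
    (hKsymm : ∀ x, K (-x) = K x) :
    ∃ C : ℝ, 0 < C ∧ ∃ η : ℝ → ℝ, (∀ b ∈ Ioo (0:ℝ) 1, 0 ≤ η b) ∧
      Tendsto η (𝓝[>] (0:ℝ)) (𝓝 0) ∧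
      ∀ n : ℕ, 1 ≤ n → ∀ b : ℝ, b ∈ Ioo (0:ℝ) 1 → 1 ≤ (n : ℝ) * b →
        ∀ u ∈ Icc (b/2) (1 - b/2),
          |(n : ℝ)⁻¹ * ∑ t ∈ Finset.Icc 1 n, b⁻¹ * K (((t : ℝ) / (n : ℝ) - u) / b)
              * ((∫ ω, Xt ((t : ℝ) / (n : ℝ)) (t : ℤ) ω ∂μ) - ∫ ω, Xt u 0 ω ∂μ)|
            ≤ η b * b + C * (n : ℝ)⁻¹ := by
  classical
  have hKinf : 0 < Kinf := hK.pos
  have hgoodprop := hderiv 0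
  set S : Ω → ℝ := fun ω => ⨆ u : Icc (0:ℝ) 1, |DX (u:ℝ) 0 ω| with hS
  have hbdd : ∀ᵐ ω ∂μ, BddAbove (range fun u : Icc (0:ℝ) 1 => |DX (u:ℝ) 0 ω|)
      ∧ ∀ v ∈ Icc (0:ℝ) 1, |DX v 0 ω| ≤ S ω := by
    filter_upwards [hgoodprop] with ω hω
    have hcont : ContinuousOn (fun u => |DX u 0 ω|) (Icc (0:ℝ) 1) := hω.2.abs
    have himg : BddAbove ((fun u => |DX u 0 ω|) '' Icc (0:ℝ) 1) :=
      (isCompact_Icc.image_of_continuousOn hcont).bddAbove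
    have hrange : (range fun u : Icc (0:ℝ) 1 => |DX (u:ℝ) 0 ω|)
        = (fun u => |DX u 0 ω|) '' Icc (0:ℝ) 1 := by
      have : (fun u : Icc (0:ℝ) 1 => |DX (u:ℝ) 0 ω|)
          = (fun u => |DX u 0 ω|) ∘ (Subtype.val) := rfl
      rw [this, Set.range_comp, Subtype.range_coe]
    have hba : BddAbove (range fun u : Icc (0:ℝ) 1 => |DX (u:ℝ) 0 ω|) := by
      rw [hrange]; exact himg
    refine ⟨hba, fun v hv => ?_⟩
    exact le_ciSup hba (⟨v, hv⟩ : Icc (0:ℝ) 1)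
  have hlip : ∀ᵐ ω ∂μ, ∀ v ∈ Icc (0:ℝ) 1, ∀ w ∈ Icc (0:ℝ) 1,
      |Xt v 0 ω - Xt w 0 ω| ≤ S ω * |v - w| := by
    filter_upwards [hgoodprop, hbdd] with ω hω hB
    intro v hv w hw
    have := Convex.norm_image_sub_le_of_norm_hasDerivWithin_le
      (f := fun z => Xt z 0 ω) (f' := fun z => DX z 0 ω) (s := Icc (0:ℝ) 1) (C := S ω)
      (fun x hx => hω.1 x hx)
      (fun x hx => by rw [Real.norm_eq_abs]; exact hB.2 x hx)
      (convex_Icc _ _) hw hv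
    simpa [Real.norm_eq_abs] using this
  have hDXaem : ∀ v ∈ Icc (0:ℝ) 1, AEMeasurable (fun ω => DX v 0 ω) μ := by
    intro v hv
    set w : ℕ → ℝ := fun k => if v ≤ 1/2 then v + ((k:ℝ)+2)⁻¹ else v - ((k:ℝ)+2)⁻¹ with hw
    have hwmem : ∀ k, w k ∈ Icc (0:ℝ) 1 \ {v} := by
      intro k
      have hpos : 0 < ((k:ℝ)+2)⁻¹ := by positivity
      have h2k : (2:ℝ) ≤ (k:ℝ)+2 := by
        have := Nat.cast_nonneg (α := ℝ) k
        linarith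
      have hle : ((k:ℝ)+2)⁻¹ ≤ 1/2 := by
        rw [show (1:ℝ)/2 = (2:ℝ)⁻¹ by norm_num]
        exact inv_anti₀ (by norm_num) h2k
      constructor
      · rw [hw]
        simp only
        split_ifs with hv2
        · exact ⟨by linarith [hv.1], by linarith⟩
        · exact ⟨by linarith, by linarith [hv.2]⟩
      · rw [mem_singleton_iff, hw]
        simp only
        split_ifs with hv2 <;> intro hc <;> linarith [hc]
    have hwt : Tendsto w atTop (𝓝[Icc (0:ℝ) 1 \ {v}] v) := by
      rw [tendsto_nhdsWithin_iff]
      refine ⟨?_, Eventually.of_forall hwmem⟩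
      have h0 : Tendsto (fun k : ℕ => ((k:ℝ)+2)⁻¹) atTop (𝓝 0) := by
        apply Tendsto.inv_tendsto_atTop
        exact tendsto_atTop_add_const_right _ 2 tendsto_natCast_atTop_atTop
      rw [hw]
      split_ifs with hv2
      · simpa using tendsto_const_nhds.add h0
      · simpa using tendsto_const_nhds.sub h0
    have hkmeas : ∀ k : ℕ, Measurable (fun ω => (w k - v)⁻¹ * (Xt (w k) 0 ω - Xt v 0 ω)) :=
      fun k => measurable_const.mul ((hXtmeas (w k) 0).sub (hXtmeas v 0))
    apply aemeasurable_of_tendsto_metrizable_ae atTop (fun k => (hkmeas k).aemeasurable)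
    filter_upwards [hgoodprop] with ω hω
    have hder := hω.1 v hv
    rw [hasDerivWithinAt_iff_tendsto_slope] at hder
    have hcomp := hder.comp hwt
    refine hcomp.congr (fun k => ?_)
    show slope (fun z => Xt z 0 ω) v (w k) = (w k - v)⁻¹ * (Xt (w k) 0 ω - Xt v 0 ω)
    rw [slope_def_field]
    rw [div_eq_inv_mul]
  haveI : Nonempty (Icc (0:ℝ) 1) := ⟨⟨0, by norm_num, by norm_num⟩⟩
  obtain ⟨e, he⟩ := TopologicalSpace.exists_dense_seq (Icc (0:ℝ) 1)
  set S2 : Ω → ℝ := fun ω => ⨆ k : ℕ, |DX ((e k : ℝ)) 0 ω| with hS2def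
  have hS2aem : AEMeasurable S2 μ :=
    AEMeasurable.iSup (fun k => measurable_abs.comp_aemeasurable (hDXaem (e k) (e k).2))
  have hS2nonneg : ∀ ω, 0 ≤ S2 ω := fun ω =>
    Real.iSup_nonneg (fun k => abs_nonneg _)
  have hS2eq : ∀ᵐ ω ∂μ, S2 ω = S ω := by
    filter_upwards [hgoodprop, hbdd] with ω hω hB
    have hFcont : Continuous (fun u : Icc (0:ℝ) 1 => |DX (u:ℝ) 0 ω|) := by
      have h1 : ContinuousOn (fun u => |DX u 0 ω|) (Icc (0:ℝ) 1) := hω.2.abs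
      rw [continuousOn_iff_continuous_restrict] at h1
      exact h1
    have hrangebdd : BddAbove (range fun k : ℕ => |DX ((e k : ℝ)) 0 ω|) := by
      apply hB.1.mono
      rintro x ⟨k, rfl⟩
      exact ⟨e k, rfl⟩
    apply le_antisymm
    · exact ciSup_le (fun k => hB.2 (e k) (e k).2)
    · apply ciSup_le
      intro u
      obtain ⟨ys, hys_mem, hys_lim⟩ := mem_closure_iff_seq_limit.mp (he u)
      have hlim2 : Tendsto (fun k => |DX ((ys k : ℝ)) 0 ω|) atTop (𝓝 (|DX (u:ℝ) 0 ω|)) :=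
        (hFcont.tendsto u).comp hys_lim
      apply le_of_tendsto hlim2
      apply Eventually.of_forall
      intro k
      obtain ⟨m, hm⟩ := hys_mem k
      rw [← hm]
      exact le_ciSup hrangebdd m
  have hq1 : (1:ENNReal) ≤ ENNReal.ofReal q := by
    rw [ENNReal.one_le_ofReal]
    exact hq
  have hS2mem : MemLp S2 (ENNReal.ofReal q) μ := by
    refine ⟨hS2aem.aestronglyMeasurable, ?_⟩
    rw [eLpNorm_congr_ae (hS2eq)]
    exact hDmom 0
  have hS2int : Integrable S2 μ := hS2mem.integrable hq1
  obtain ⟨M, hM⟩ := hmom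
  have hXtint : ∀ v ∈ Icc (0:ℝ) 1, Integrable (Xt v 0) μ := by
    intro v hv
    apply MemLp.integrable hq1
    exact ⟨(hXtmeas v 0).aestronglyMeasurable,
      lt_of_le_of_lt (hM v hv) ENNReal.ofReal_lt_top⟩
  have hDXint : ∀ v ∈ Icc (0:ℝ) 1, Integrable (fun ω => DX v 0 ω) μ := by
    intro v hv
    apply hS2int.mono' (hDXaem v hv).aestronglyMeasurable
    filter_upwards [hbdd, hS2eq] with ω hB heq
    rw [Real.norm_eq_abs, heq]
    exact hB.2 v hv
  set g : ℝ → ℝ := fun v => ∫ ω, Xt v 0 ω ∂μ with hgdef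
  set G : ℝ → ℝ := fun v => ∫ ω, DX v 0 ω ∂μ with hGdef
  have hgderiv : ∀ v ∈ Icc (0:ℝ) 1, HasDerivWithinAt g (G v) (Icc (0:ℝ) 1) v := by
    intro v hv
    rw [hasDerivWithinAt_iff_tendsto_slope]
    have key := MeasureTheory.tendsto_integral_filter_of_dominated_convergence
      (μ := μ) (l := 𝓝[Icc (0:ℝ) 1 \ {v}] v)
      (F := fun w ω => (w - v)⁻¹ * (Xt w 0 ω - Xt v 0 ω))
      (f := fun ω => DX v 0 ω) (bound := S2)
      (Eventually.of_forall fun w =>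
        (measurable_const.mul ((hXtmeas w 0).sub (hXtmeas v 0))).aestronglyMeasurable)
      ?_ hS2int ?_
    · have heq : ∀ᶠ w in 𝓝[Icc (0:ℝ) 1 \ {v}] v,
          (∫ ω, (w - v)⁻¹ * (Xt w 0 ω - Xt v 0 ω) ∂μ) = slope g v w := by
        filter_upwards [self_mem_nhdsWithin] with w hw
        rw [MeasureTheory.integral_const_mul, integral_sub (hXtint w hw.1) (hXtint v hv)]
        rw [slope_def_field, div_eq_inv_mul]
      exact key.congr' heq
    · filter_upwards [self_mem_nhdsWithin] with w hw
      filter_upwards [hlip, hS2eq] with ω hlipω heqω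
      have hwv : w ≠ v := by
        intro hc
        exact hw.2 (by simp [hc])
      have habs : 0 < |w - v| := by
        rw [abs_pos]
        exact sub_ne_zero_of_ne hwv
      rw [Real.norm_eq_abs, abs_mul, abs_inv]
      have h1 := hlipω w hw.1 v hv
      calc |w - v|⁻¹ * |Xt w 0 ω - Xt v 0 ω| ≤ |w - v|⁻¹ * (S ω * |w - v|) := by
            apply mul_le_mul_of_nonneg_left _ (by positivity)
            rw [show |w - v| = |w - v| from rfl] at h1
            exact h1
        _ = S ω * (|w - v|⁻¹ * |w - v|) := by ring
        _ = S ω := by rw [inv_mul_cancel₀ (ne_of_gt habs), mul_one]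
        _ = S2 ω := heqω.symm
    · filter_upwards [hgoodprop] with ω hω
      have hder := hω.1 v hv
      rw [hasDerivWithinAt_iff_tendsto_slope] at hder
      refine hder.congr ?_
      intro w
      rw [slope_def_field, div_eq_inv_mul]
  have hGcont : ContinuousOn G (Icc (0:ℝ) 1) := by
    intro v hv
    have key := MeasureTheory.tendsto_integral_filter_of_dominated_convergence
      (μ := μ) (l := 𝓝[Icc (0:ℝ) 1] v)
      (F := fun w ω => DX w 0 ω) (f := fun ω => DX v 0 ω) (bound := S2)
      ?_ ?_ hS2int ?_
    · exact key
    · filter_upwards [self_mem_nhdsWithin] with w hw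
      exact (hDXaem w hw).aestronglyMeasurable
    · filter_upwards [self_mem_nhdsWithin] with w hw
      filter_upwards [hbdd, hS2eq] with ω hB heq
      rw [Real.norm_eq_abs, heq]
      exact hB.2 w hw
    · filter_upwards [hgoodprop] with ω hω
      exact hω.2 v hv
  set D : ℝ := ∫ ω, S2 ω ∂μ with hDdef
  have hDnonneg : 0 ≤ D := integral_nonneg hS2nonneg
  have hGbound : ∀ v ∈ Icc (0:ℝ) 1, |G v| ≤ D := by
    intro v hv
    rw [show |G v| = ‖G v‖ from rfl]
    apply norm_integral_le_of_norm_le hS2int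
    filter_upwards [hbdd, hS2eq] with ω hB heq
    rw [Real.norm_eq_abs, heq]
    exact hB.2 v hv
  -- modulus of continuity of G
  set Gset : ℝ → Set ℝ := fun δ =>
    (fun p : ℝ × ℝ => |G p.1 - G p.2|) ''
      {p : ℝ × ℝ | p.1 ∈ Icc (0:ℝ) 1 ∧ p.2 ∈ Icc (0:ℝ) 1 ∧ |p.1 - p.2| ≤ δ} with hGsetdef
  have hGsetne : ∀ δ : ℝ, 0 ≤ δ → (0:ℝ) ∈ Gset δ := by
    intro δ hδ
    refine ⟨(0, 0), ⟨?_, ?_, by simpa using hδ⟩, by simp⟩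
    · exact ⟨le_refl _, by norm_num⟩
    · exact ⟨le_refl _, by norm_num⟩
  have hGsetbdd : ∀ δ : ℝ, BddAbove (Gset δ) := by
    intro δ
    refine ⟨2 * D, ?_⟩
    rintro y ⟨⟨x1, x2⟩, ⟨hx1, hx2, _⟩, rfl⟩
    calc |G x1 - G x2| ≤ |G x1| + |G x2| := abs_sub _ _
      _ ≤ D + D := add_le_add (hGbound x1 hx1) (hGbound x2 hx2)
      _ = 2 * D := by ring
  set ω0 : ℝ → ℝ := fun δ => sSup (Gset δ) with hω0def
  have hω0nonneg : ∀ δ : ℝ, 0 ≤ δ → 0 ≤ ω0 δ :=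
    fun δ hδ => le_csSup (hGsetbdd δ) (hGsetne δ hδ)
  have hω0bound : ∀ δ : ℝ, ∀ x ∈ Icc (0:ℝ) 1, ∀ y ∈ Icc (0:ℝ) 1,
      |x - y| ≤ δ → |G x - G y| ≤ ω0 δ := by
    intro δ x hx y hy hxy
    exact le_csSup (hGsetbdd δ) ⟨(x, y), ⟨hx, hy, hxy⟩, rfl⟩
  have hω0tendsto : Tendsto ω0 (𝓝[>] (0:ℝ)) (𝓝 0) := by
    rw [Metric.tendsto_nhdsWithin_nhds]
    intro ε hε
    have hUC := isCompact_Icc.uniformContinuousOn_of_continuous hGcont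
    rw [Metric.uniformContinuousOn_iff] at hUC
    obtain ⟨δ₀, hδ₀, hδ₀'⟩ := hUC (ε/2) (by linarith)
    refine ⟨δ₀, hδ₀, ?_⟩
    intro δ hδ hdist
    rw [Real.dist_eq] at hdist
    rw [Real.dist_eq, sub_zero, abs_of_nonneg (hω0nonneg δ (le_of_lt hδ))]
    have hsup : ω0 δ ≤ ε/2 := by
      apply csSup_le ⟨0, hGsetne δ (le_of_lt hδ)⟩
      rintro y ⟨⟨x1, x2⟩, ⟨hx1, hx2, hx12⟩, rfl⟩
      have hd : dist x1 x2 < δ₀ := by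
        rw [Real.dist_eq]
        calc |x1 - x2| ≤ δ := hx12
          _ = |δ - 0| := by rw [sub_zero, abs_of_pos hδ]
          _ < δ₀ := hdist
      have := hδ₀' x1 hx1 x2 hx2 hd
      rw [Real.dist_eq] at this
      linarith
    linarith
  -- final witnesses
  refine ⟨D * (2*Kinf + 2*max BK 0) + 1, ?_, fun b => Kinf * ω0 b, ?_, ?_, ?_⟩
  · have h1 : 0 ≤ D * (2*Kinf + 2*max BK 0) :=
      mul_nonneg hDnonneg (by positivity)
    linarith
  · intro b hbmem
    exact mul_nonneg hKinf.le (hω0nonneg b hbmem.1.le)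
  · have := hω0tendsto.const_mul Kinf
    simpa using this
  · intro n hn b hbmem hnb u humem
    obtain ⟨hb, hb1⟩ := hbmem
    obtain ⟨hu1, hu2⟩ := humem
    have hnpos : (0:ℝ) < (n:ℝ) := by exact_mod_cast hn
    have huIcc : u ∈ Icc (0:ℝ) 1 := ⟨by linarith, by linarith⟩
    have hstat' : ∀ t ∈ Finset.Icc 1 n,
        b⁻¹ * K (((t:ℝ)/(n:ℝ) - u)/b)
          * ((∫ ω, Xt ((t:ℝ)/(n:ℝ)) (t:ℤ) ω ∂μ) - ∫ ω, Xt u 0 ω ∂μ)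
        = b⁻¹ * K (((t:ℝ)/(n:ℝ) - u)/b) * (g ((t:ℝ)/(n:ℝ)) - g u) := by
      intro t ht
      rw [Finset.mem_Icc] at ht
      have htn : (t:ℝ)/(n:ℝ) ∈ Icc (0:ℝ) 1 := by
        constructor
        · positivity
        · rw [div_le_one hnpos]
          exact_mod_cast ht.2
      have hsi := stat_integral μ (fun s => Xt ((t:ℝ)/(n:ℝ)) s)
        (fun s => hXtmeas _ s) (hstat _ htn) t
      rw [hsi]
    rw [Finset.sum_congr rfl hstat']
    have hreidx : ∑ t ∈ Finset.Icc 1 n,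
        b⁻¹ * K (((t:ℝ)/(n:ℝ) - u)/b) * (g ((t:ℝ)/(n:ℝ)) - g u)
        = ∑ i ∈ Finset.range n,
          b⁻¹ * K ((((i:ℝ)+1)/(n:ℝ) - u)/b) * (g (((i:ℝ)+1)/(n:ℝ)) - g u) := by
      rw [← Finset.Ico_add_one_right_eq_Icc, Finset.sum_Ico_eq_sum_range]
      apply Finset.sum_congr rfl
      intro i _
      have hcast : ((1 + i : ℕ) : ℝ) = (i:ℝ) + 1 := by push_cast; ring
      rw [hcast]
    rw [hreidx]
    -- Taylor per-term bound
    have hxiIcc : ∀ i ∈ Finset.range n, ((i:ℝ)+1)/(n:ℝ) ∈ Icc (0:ℝ) 1 := by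
      intro i hi
      rw [Finset.mem_range] at hi
      constructor
      · positivity
      · rw [div_le_one hnpos]
        have : (i:ℝ) + 1 ≤ (n:ℝ) := by exact_mod_cast hi
        linarith
    have htaylor : ∀ i ∈ Finset.range n,
        |b⁻¹ * K ((((i:ℝ)+1)/(n:ℝ) - u)/b)
          * ((g (((i:ℝ)+1)/(n:ℝ)) - g u) - G u * (((i:ℝ)+1)/(n:ℝ) - u))|
        ≤ |b⁻¹ * K ((((i:ℝ)+1)/(n:ℝ) - u)/b)| * (ω0 b * (b/2)) := by
      intro i hi
      set y : ℝ := ((i:ℝ)+1)/(n:ℝ) with hydef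
      by_cases hc : K ((y - u)/b) = 0
      · rw [hc]
        simp
      · have hyu : |y - u| ≤ b/2 := support_arg K b u hK.supp hb y hc
        have hyIcc : y ∈ Icc (0:ℝ) 1 := hxiIcc i hi
        have hsub : uIcc u y ⊆ Icc (0:ℝ) 1 := by
          intro w hw
          rw [mem_uIcc] at hw
          rcases hw with ⟨h1, h2⟩ | ⟨h1, h2⟩
          · exact ⟨by linarith [huIcc.1], by linarith [hyIcc.2]⟩
          · exact ⟨by linarith [hyIcc.1], by linarith [huIcc.2]⟩
        have hderφ : ∀ w ∈ uIcc u y,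
            HasDerivWithinAt (fun z => g z - G u * z) (G w - G u) (uIcc u y) w := by
          intro w hw
          have h1 := (hgderiv w (hsub hw)).mono hsub
          have h2 : HasDerivWithinAt (fun z : ℝ => G u * z) (G u) (uIcc u y) w := by
            simpa using (hasDerivWithinAt_id w (uIcc u y)).const_mul (G u)
          exact h1.sub h2
        have hbnd : ∀ w ∈ uIcc u y, ‖G w - G u‖ ≤ ω0 b := by
          intro w hw
          have hwIcc := hsub hw
          have hwu : |w - u| ≤ b := by
            have hd1 := le_abs_self (y - u)
            have hd2 := neg_abs_le (y - u)
            rw [mem_uIcc] at hw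
            rw [abs_le]
            rcases hw with ⟨h1, h2⟩ | ⟨h1, h2⟩
            · constructor <;> linarith
            · constructor <;> linarith
          rw [Real.norm_eq_abs]
          exact hω0bound b w hwIcc u huIcc hwu
        have hMVT := Convex.norm_image_sub_le_of_norm_hasDerivWithin_le
          hderφ hbnd (convex_uIcc _ _) left_mem_uIcc right_mem_uIcc
        rw [Real.norm_eq_abs, Real.norm_eq_abs] at hMVT
        have hrr : |(g y - g u) - G u * (y - u)| ≤ ω0 b * (b/2) := by
          have heq1 : (g y - G u * y) - (g u - G u * u) = (g y - g u) - G u * (y - u) := by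
            ring
          rw [heq1] at hMVT
          calc |(g y - g u) - G u * (y - u)| ≤ ω0 b * |y - u| := hMVT
            _ ≤ ω0 b * (b/2) :=
              mul_le_mul_of_nonneg_left hyu (hω0nonneg b hb.le)
        rw [abs_mul]
        exact mul_le_mul_of_nonneg_left hrr (abs_nonneg _)
    -- split the sum
    have hsplit : (n:ℝ)⁻¹ * ∑ i ∈ Finset.range n,
        b⁻¹ * K ((((i:ℝ)+1)/(n:ℝ) - u)/b) * (g (((i:ℝ)+1)/(n:ℝ)) - g u)
        = G u * (∑ i ∈ Finset.range n,
            (n:ℝ)⁻¹ * (b⁻¹ * K ((((i:ℝ)+1)/(n:ℝ) - u)/b) * (((i:ℝ)+1)/(n:ℝ) - u)))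
          + (n:ℝ)⁻¹ * ∑ i ∈ Finset.range n,
            b⁻¹ * K ((((i:ℝ)+1)/(n:ℝ) - u)/b)
              * ((g (((i:ℝ)+1)/(n:ℝ)) - g u) - G u * (((i:ℝ)+1)/(n:ℝ) - u)) := by
      rw [Finset.mul_sum, Finset.mul_sum, Finset.mul_sum, ← Finset.sum_add_distrib]
      apply Finset.sum_congr rfl
      intro i _
      ring
    rw [hsplit]
    have hmain := riemann_bound K Kinf BK hK.bound hK.bv hK.supp hKsymm
      n hn b hb hb1 hnb u hu1 hu2
    have hsumf := kernel_sum_bound K Kinf hK.bound hK.supp n hn b u hb hb1 hnb hu1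
    have hrem : |(n:ℝ)⁻¹ * ∑ i ∈ Finset.range n,
        b⁻¹ * K ((((i:ℝ)+1)/(n:ℝ) - u)/b)
          * ((g (((i:ℝ)+1)/(n:ℝ)) - g u) - G u * (((i:ℝ)+1)/(n:ℝ) - u))|
        ≤ Kinf * ω0 b * b := by
      rw [abs_mul, abs_of_pos (by positivity : (0:ℝ) < (n:ℝ)⁻¹)]
      calc (n:ℝ)⁻¹ * |∑ i ∈ Finset.range n,
            b⁻¹ * K ((((i:ℝ)+1)/(n:ℝ) - u)/b)
              * ((g (((i:ℝ)+1)/(n:ℝ)) - g u) - G u * (((i:ℝ)+1)/(n:ℝ) - u))|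
          ≤ (n:ℝ)⁻¹ * ∑ i ∈ Finset.range n,
            |b⁻¹ * K ((((i:ℝ)+1)/(n:ℝ) - u)/b)| * (ω0 b * (b/2)) := by
            apply mul_le_mul_of_nonneg_left _ (by positivity)
            exact le_trans (Finset.abs_sum_le_sum_abs _ _) (Finset.sum_le_sum htaylor)
        _ = (n:ℝ)⁻¹ * (∑ i ∈ Finset.range n,
            |b⁻¹ * K ((((i:ℝ)+1)/(n:ℝ) - u)/b)|) * (ω0 b * (b/2)) := by
            rw [← Finset.sum_mul]
            ring
        _ ≤ (n:ℝ)⁻¹ * (2*(n:ℝ)*Kinf) * (ω0 b * (b/2)) := by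
            apply mul_le_mul_of_nonneg_right _
              (mul_nonneg (hω0nonneg b hb.le) (by positivity))
            exact mul_le_mul_of_nonneg_left hsumf (by positivity)
        _ = ((n:ℝ) * (n:ℝ)⁻¹) * Kinf * ω0 b * b := by ring
        _ = Kinf * ω0 b * b := by
            rw [mul_inv_cancel₀ (ne_of_gt hnpos)]
            ring
    calc |G u * (∑ i ∈ Finset.range n,
            (n:ℝ)⁻¹ * (b⁻¹ * K ((((i:ℝ)+1)/(n:ℝ) - u)/b) * (((i:ℝ)+1)/(n:ℝ) - u)))
          + (n:ℝ)⁻¹ * ∑ i ∈ Finset.range n,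
            b⁻¹ * K ((((i:ℝ)+1)/(n:ℝ) - u)/b)
              * ((g (((i:ℝ)+1)/(n:ℝ)) - g u) - G u * (((i:ℝ)+1)/(n:ℝ) - u))|
        ≤ |G u| * |∑ i ∈ Finset.range n,
            (n:ℝ)⁻¹ * (b⁻¹ * K ((((i:ℝ)+1)/(n:ℝ) - u)/b) * (((i:ℝ)+1)/(n:ℝ) - u))|
          + Kinf * ω0 b * b := by
          refine le_trans (abs_add_le _ _) ?_
          rw [abs_mul]
          exact add_le_add_right hrem _
      _ ≤ D * ((2*Kinf + 2*max BK 0) * (n:ℝ)⁻¹) + Kinf * ω0 b * b := by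
          apply add_le_add_left
          apply mul_le_mul (hGbound u huIcc) hmain (abs_nonneg _) hDnonneg
      _ ≤ Kinf * ω0 b * b + (D * (2*Kinf + 2*max BK 0) + 1) * (n:ℝ)⁻¹ := by
          have h1 : D * ((2*Kinf + 2*max BK 0) * (n:ℝ)⁻¹)
              = (D * (2*Kinf + 2*max BK 0)) * (n:ℝ)⁻¹ := by ring
          have h2 : (D * (2*Kinf + 2*max BK 0)) * (n:ℝ)⁻¹
              ≤ (D * (2*Kinf + 2*max BK 0) + 1) * (n:ℝ)⁻¹ := by
            apply mul_le_mul_of_nonneg_right _ (by positivity)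
            linarith
          linarith
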